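/- (Perturbation bound for matrix square roots.) Let C ∈ ℝ^{p×p} be symmetric positive definite and D ∈ ℝ^{p×p} symmetric positive semidefinite. Then, with square roots denoting positive semidefinite matrix square roots, ‖(C+D)^{1/2} − C^{1/2}‖ ≤ (1/2) ‖(C^{1/2})⁻¹‖ · ‖D‖ in spectral norm. -/

import Mathlib

open Matrix MeasureTheory
open scoped Matrix.Norms.L2Operator NNReal RealInnerProductSpace

/-- The ensemble mean `x̄ = (1/M) ∑ᵢ X⁽ⁱ⁾`. -/
noncomputable def ensMean {d M : ℕ} (X : Fin M → EuclideanSpace ℝ (Fin d)) :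
    EuclideanSpace ℝ (Fin d) :=
  (M : ℝ)⁻¹ • ∑ i, X i

/-- The matrix of ensemble deviations, with columns `X⁽ⁱ⁾ − x̄`. -/
noncomputable def devMat {d M : ℕ} (X : Fin M → EuclideanSpace ℝ (Fin d)) :
    Matrix (Fin d) (Fin M) ℝ :=
  Matrix.of fun j i => (X i - ensMean X) j

/-- The trace of the empirical covariance matrix,
`tr(P) = (1/(M−1)) ∑ᵢ ‖X⁽ⁱ⁾ − x̄‖²`. -/
noncomputable def trP {d M : ℕ} (X : Fin M → EuclideanSpace ℝ (Fin d)) : ℝ :=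
  ((M : ℝ) - 1)⁻¹ * ∑ i, ‖X i - ensMean X‖ ^ 2

/-- The positive semidefinite square root of a positive semidefinite matrix
(the definition of `Matrix.PosSemidef.sqrt` in the older Mathlib). -/
noncomputable def Matrix.PosSemidef.sqrt {n 𝕜 : Type*} [Fintype n] [DecidableEq n] [RCLike 𝕜]
    [PartialOrder 𝕜]     {A : Matrix n n 𝕜} (hA : A.PosSemidef) : Matrix n n 𝕜 :=
  hA.1.eigenvectorUnitary.1 * diagonal ((↑) ∘ (√·) ∘ hA.1.eigenvalues) *
    (star hA.1.eigenvectorUnitary : Matrix n n 𝕜)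

lemma Matrix.PosSemidef.posSemidef_sqrt {p : ℕ} {A : Matrix (Fin p) (Fin p) ℝ}
    (hA : A.PosSemidef) : hA.sqrt.PosSemidef := by
  unfold Matrix.PosSemidef.sqrt
  rw [Matrix.IsUnit.posSemidef_star_right_conjugate_iff Unitary.isUnit_coe]
  rw [posSemidef_diagonal_iff]
  intro i
  simp [Real.sqrt_nonneg]

lemma Matrix.PosSemidef.sqrt_mul_self {p : ℕ} {A : Matrix (Fin p) (Fin p) ℝ}
    (hA : A.PosSemidef) : hA.sqrt * hA.sqrt = A := by
  unfold Matrix.PosSemidef.sqrt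
  have hU : (star hA.1.eigenvectorUnitary : Matrix (Fin p) (Fin p) ℝ) *
      hA.1.eigenvectorUnitary.1 = 1 := Unitary.coe_star_mul_self _
  have hd : diagonal (RCLike.ofReal ∘ (√·) ∘ hA.1.eigenvalues) * diagonal (RCLike.ofReal ∘ (√·) ∘ hA.1.eigenvalues)
      = diagonal (RCLike.ofReal ∘ hA.1.eigenvalues : Fin p → ℝ) := by
    rw [diagonal_mul_diagonal]
    congr 1; funext i
    simp [Real.mul_self_sqrt (hA.eigenvalues_nonneg i)]
  calc _ = hA.1.eigenvectorUnitary.1 * (diagonal (RCLike.ofReal ∘ (√·) ∘ hA.1.eigenvalues) *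
        ((star hA.1.eigenvectorUnitary : Matrix (Fin p) (Fin p) ℝ) *
      hA.1.eigenvectorUnitary.1) * diagonal (RCLike.ofReal ∘ (√·) ∘ hA.1.eigenvalues)) *
        (star hA.1.eigenvectorUnitary : Matrix (Fin p) (Fin p) ℝ) := by
          simp only [Matrix.mul_assoc]
    _ = A := by
      rw [hU, Matrix.mul_one, hd]
      conv_rhs => rw [hA.1.spectral_theorem, Unitary.conjStarAlgAut_apply]

section SqrtPerturbAux
variable {p : ℕ}



lemma inner_eq_dot (x y : EuclideanSpace ℝ (Fin p)) : ⟪x, y⟫ = ⇑x ⬝ᵥ ⇑y := by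
  simp [PiLp.inner_apply, dotProduct, mul_comm]

lemma eu_coe (x : Fin p → ℝ) : ⇑((EuclideanSpace.equiv (Fin p) ℝ).symm x) = x := rfl

lemma eu_coe' (x : EuclideanSpace ℝ (Fin p)) : (EuclideanSpace.equiv (Fin p) ℝ).symm ⇑x = x := rfl

lemma repr_mulVec {M : Matrix (Fin p) (Fin p) ℝ} (hM : M.IsHermitian)
    (y : EuclideanSpace ℝ (Fin p)) (i : Fin p) :
    hM.eigenvectorBasis.repr ((EuclideanSpace.equiv (Fin p) ℝ).symm (M *ᵥ ⇑y)) i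
      = hM.eigenvalues i * hM.eigenvectorBasis.repr y i := by
  rw [OrthonormalBasis.repr_apply_apply, OrthonormalBasis.repr_apply_apply,
    inner_eq_dot, inner_eq_dot, eu_coe, dotProduct_mulVec]
  have hMt : Mᵀ = M := by
    ext a b; have := congrFun (congrFun hM a) b; simpa using this
  have ht : ∀ w : Fin p → ℝ, w ᵥ* M = M *ᵥ w := by
    intro w; conv_lhs => rw [← hMt]
    rw [vecMul_transpose]
  rw [ht, hM.mulVec_eigenvectorBasis, smul_dotProduct, smul_eq_mul]

lemma norm_sq_repr {M : Matrix (Fin p) (Fin p) ℝ} (hM : M.IsHermitian)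
    (y : EuclideanSpace ℝ (Fin p)) :
    ‖y‖ ^ 2 = ∑ i, (hM.eigenvectorBasis.repr y i) ^ 2 := by
  rw [← hM.eigenvectorBasis.repr.norm_map y, EuclideanSpace.norm_eq,
    Real.sq_sqrt (by positivity)]
  simp [sq]

lemma inner_mulVec_repr {M : Matrix (Fin p) (Fin p) ℝ} (hM : M.IsHermitian)
    (y : EuclideanSpace ℝ (Fin p)) :
    ⟪y, (EuclideanSpace.equiv (Fin p) ℝ).symm (M *ᵥ ⇑y)⟫
      = ∑ i, hM.eigenvalues i * (hM.eigenvectorBasis.repr y i) ^ 2 := by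
  rw [← hM.eigenvectorBasis.repr.inner_map_map y]
  simp only [PiLp.inner_apply, RCLike.inner_apply, starRingEnd_apply, star_trivial]
  refine Finset.sum_congr rfl fun i _ => ?_
  rw [repr_mulVec hM y i]; ring

lemma hermitian_opNorm_le {M : Matrix (Fin p) (Fin p) ℝ} (hM : M.IsHermitian)
    {K : ℝ} (hK : 0 ≤ K) (h : ∀ i, |hM.eigenvalues i| ≤ K) : ‖M‖ ≤ K := by
  rw [Matrix.l2_opNorm_def]
  refine ContinuousLinearMap.opNorm_le_bound _ hK fun x => ?_
  have hx : (Matrix.toEuclideanLin (𝕜 := ℝ) (m := Fin p) (n := Fin p)).trans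
      LinearMap.toContinuousLinearMap M x
      = (EuclideanSpace.equiv (Fin p) ℝ).symm (M *ᵥ ⇑x) := rfl
  rw [hx]
  have h1 : ‖(EuclideanSpace.equiv (Fin p) ℝ).symm (M *ᵥ ⇑x)‖ ^ 2 ≤ (K * ‖x‖) ^ 2 := by
    rw [norm_sq_repr hM]
    have h2 : (K * ‖x‖) ^ 2 = ∑ i, K ^ 2 * (hM.eigenvectorBasis.repr x i) ^ 2 := by
      rw [← Finset.mul_sum, ← norm_sq_repr hM]; ring
    rw [h2]
    refine Finset.sum_le_sum fun i _ => ?_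
    rw [repr_mulVec hM x i, mul_pow]
    have h3 : hM.eigenvalues i ^ 2 ≤ K ^ 2 := by
      rw [← sq_abs]
      exact pow_le_pow_left₀ (abs_nonneg _) (h i) 2
    exact mul_le_mul_of_nonneg_right h3 (sq_nonneg _)
  nlinarith [norm_nonneg ((EuclideanSpace.equiv (Fin p) ℝ).symm (M *ᵥ ⇑x)),
    mul_nonneg hK (norm_nonneg x)]

lemma rayleigh_lower {M : Matrix (Fin p) (Fin p) ℝ} (hM : M.IsHermitian) {c : ℝ}
    (hc : ∀ i, c ≤ hM.eigenvalues i) (y : EuclideanSpace ℝ (Fin p)) :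
    c * ‖y‖ ^ 2 ≤ ⇑y ⬝ᵥ (M *ᵥ ⇑y) := by
  have h0 : ⇑y ⬝ᵥ (M *ᵥ ⇑y) = ⟪y, (EuclideanSpace.equiv (Fin p) ℝ).symm (M *ᵥ ⇑y)⟫ := by
    rw [inner_eq_dot, eu_coe]
  rw [h0, inner_mulVec_repr hM, norm_sq_repr hM, Finset.mul_sum]
  exact Finset.sum_le_sum fun i _ =>
    mul_le_mul_of_nonneg_right (hc i) (sq_nonneg _)

lemma sq_lower {B : Matrix (Fin p) (Fin p) ℝ} (hBt : Bᵀ = B) (hB : IsUnit B.det)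
    (x : EuclideanSpace ℝ (Fin p)) :
    ‖x‖ ^ 2 ≤ ‖B⁻¹‖ ^ 2 * (⇑x ⬝ᵥ ((B * B) *ᵥ ⇑x)) := by
  have h1 : ⇑x ⬝ᵥ ((B * B) *ᵥ ⇑x)
      = ‖(EuclideanSpace.equiv (Fin p) ℝ).symm (B *ᵥ ⇑x)‖ ^ 2 := by
    have ht : ∀ w : Fin p → ℝ, w ᵥ* B = B *ᵥ w := by
      intro w; conv_lhs => rw [← hBt]
      rw [vecMul_transpose]
    rw [← mulVec_mulVec, dotProduct_mulVec, ht, ← real_inner_self_eq_norm_sq,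
      inner_eq_dot, eu_coe]
  have h2 : ‖x‖ ≤ ‖B⁻¹‖ * ‖(EuclideanSpace.equiv (Fin p) ℝ).symm (B *ᵥ ⇑x)‖ := by
    have h3 : ⇑x = B⁻¹ *ᵥ (B *ᵥ ⇑x) := by
      rw [mulVec_mulVec, Matrix.nonsing_inv_mul B hB, one_mulVec]
    calc ‖x‖ = ‖(EuclideanSpace.equiv (Fin p) ℝ).symm (B⁻¹ *ᵥ (B *ᵥ ⇑x))‖ := by
          rw [← h3, eu_coe']
    _ ≤ ‖B⁻¹‖ * ‖(EuclideanSpace.equiv (Fin p) ℝ).symm (B *ᵥ ⇑x)‖ :=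
          Matrix.l2_opNorm_mulVec B⁻¹ ((EuclideanSpace.equiv (Fin p) ℝ).symm (B *ᵥ ⇑x))
  rw [h1]
  nlinarith [norm_nonneg x, norm_nonneg ((EuclideanSpace.equiv (Fin p) ℝ).symm (B *ᵥ ⇑x))]

lemma eig_lower {M : Matrix (Fin p) (Fin p) ℝ} (hM : M.PosSemidef) {K : ℝ} (hK : 0 < K)
    (h : ∀ x : EuclideanSpace ℝ (Fin p), ‖x‖ ^ 2 ≤ K ^ 2 * (⇑x ⬝ᵥ ((M * M) *ᵥ ⇑x)))
    (i : Fin p) : K⁻¹ ≤ hM.1.eigenvalues i := by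
  set μ := hM.1.eigenvalues i with hμdef
  set v := hM.1.eigenvectorBasis i with hvdef
  have hnv : ‖v‖ = 1 := hM.1.eigenvectorBasis.orthonormal.1 i
  have hev : M *ᵥ ⇑v = μ • ⇑v := hM.1.mulVec_eigenvectorBasis i
  have hvv : ⇑v ⬝ᵥ ⇑v = 1 := by
    rw [← inner_eq_dot, real_inner_self_eq_norm_sq, hnv]; norm_num
  have hMM : ⇑v ⬝ᵥ ((M * M) *ᵥ ⇑v) = μ ^ 2 := by
    rw [← mulVec_mulVec, hev, mulVec_smul, hev, smul_smul, dotProduct_smul,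
      smul_eq_mul, hvv]; ring
  have h1 := h v
  rw [hMM, hnv] at h1
  have hμ0 : 0 ≤ μ := hM.eigenvalues_nonneg i
  have h4 : 1 ≤ K * μ := by nlinarith [mul_nonneg hK.le hμ0]
  have h5 : K⁻¹ * 1 ≤ K⁻¹ * (K * μ) := mul_le_mul_of_nonneg_left h4 (inv_pos.2 hK).le
  simpa [← mul_assoc, inv_mul_cancel₀ hK.ne'] using h5


end SqrtPerturbAux

/-- perturbation bound for matrix square roots:
`‖(C+D)^{1/2} − C^{1/2}‖ ≤ (1/2) ‖(C^{1/2})⁻¹‖ ‖D‖` in spectral norm. -/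
theorem sqrt_perturbation_bound {p : ℕ} (C D : Matrix (Fin p) (Fin p) ℝ)
    (hC : C.PosDef) (hD : D.PosSemidef) :
    ‖(hC.posSemidef.add hD).sqrt - hC.posSemidef.sqrt‖ ≤
      (1 / 2) * ‖(hC.posSemidef.sqrt)⁻¹‖ * ‖D‖ := by
  rcases Nat.eq_zero_or_pos p with hp | hp
  · subst hp
    have h1 : (hC.posSemidef.add hD).sqrt - hC.posSemidef.sqrt = 0 := Subsingleton.elim _ _
    have h2 : (hC.posSemidef.sqrt)⁻¹ = 0 := Subsingleton.elim _ _
    rw [h1, h2, norm_zero]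
    simp
  · haveI : Nonempty (Fin p) := Fin.pos_iff_nonempty.mp hp
    have hBps : (hC.posSemidef.sqrt).PosSemidef := hC.posSemidef.posSemidef_sqrt
    have hAps : ((hC.posSemidef.add hD).sqrt).PosSemidef :=
      (hC.posSemidef.add hD).posSemidef_sqrt
    set B := hC.posSemidef.sqrt with hBdef
    set A := (hC.posSemidef.add hD).sqrt with hAdef
    have hBB : B * B = C := hC.posSemidef.sqrt_mul_self
    have hAA : A * A = C + D := (hC.posSemidef.add hD).sqrt_mul_self
    have hBt : Bᵀ = B := by
      ext a b; have := congrFun (congrFun hBps.1 a) b; simpa using this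
    have hdet : IsUnit B.det := by
      have hdC : 0 < C.det := hC.det_pos
      have h3 : B.det * B.det = C.det := by rw [← det_mul, hBB]
      refine isUnit_iff_ne_zero.2 fun h0 => ?_
      rw [h0, mul_zero] at h3; linarith
    have hBinv_ne : B⁻¹ ≠ 0 := by
      intro h0
      have h4 := Matrix.nonsing_inv_mul B hdet
      rw [h0, Matrix.zero_mul] at h4
      have h5 : (1 : ℝ) = 0 := by simpa using congrFun (congrFun h4.symm ⟨0, hp⟩) ⟨0, hp⟩
      exact one_ne_zero h5
    have hKpos : 0 < ‖B⁻¹‖ := norm_pos_iff.mpr hBinv_ne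
    set c : ℝ := ‖B⁻¹‖⁻¹ with hcdef
    have hc : 0 < c := inv_pos.2 hKpos
    have hcK : c * ‖B⁻¹‖ = 1 := inv_mul_cancel₀ hKpos.ne'
    have hClow : ∀ x : EuclideanSpace ℝ (Fin p),
        ‖x‖ ^ 2 ≤ ‖B⁻¹‖ ^ 2 * (⇑x ⬝ᵥ (C *ᵥ ⇑x)) := fun x => by
      have := sq_lower hBt hdet x; rwa [hBB] at this
    have hCDlow : ∀ x : EuclideanSpace ℝ (Fin p),
        ‖x‖ ^ 2 ≤ ‖B⁻¹‖ ^ 2 * (⇑x ⬝ᵥ ((C + D) *ᵥ ⇑x)) := fun x => by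
      have h1 := hClow x
      have h2 : 0 ≤ ⇑x ⬝ᵥ (D *ᵥ ⇑x) := by simpa using hD.dotProduct_mulVec_nonneg ⇑x
      have h3 : ⇑x ⬝ᵥ ((C + D) *ᵥ ⇑x) = ⇑x ⬝ᵥ (C *ᵥ ⇑x) + ⇑x ⬝ᵥ (D *ᵥ ⇑x) := by
        rw [add_mulVec, dotProduct_add]
      nlinarith [sq_nonneg ‖B⁻¹‖]
    have hBeig : ∀ i, c ≤ hBps.1.eigenvalues i :=
      fun i => eig_lower hBps hKpos (fun x => by rw [hBB]; exact hClow x) i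
    have hAeig : ∀ i, c ≤ hAps.1.eigenvalues i :=
      fun i => eig_lower hAps hKpos (fun x => by rw [hAA]; exact hCDlow x) i
    have hAlow := rayleigh_lower hAps.1 hAeig
    have hBlow := rayleigh_lower hBps.1 hBeig
    have hE : (A - B).IsHermitian := hAps.1.sub hBps.1
    have hID : A * (A - B) + (A - B) * B = D := by
      rw [mul_sub, sub_mul, hAA, hBB]; abel
    have hbound : ∀ i, |hE.eigenvalues i| ≤ 1 / 2 * ‖B⁻¹‖ * ‖D‖ := by
      intro i
      set μ := hE.eigenvalues i with hμdef
      set v := hE.eigenvectorBasis i with hvdef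
      have hnv : ‖v‖ = 1 := hE.eigenvectorBasis.orthonormal.1 i
      have hev : (A - B) *ᵥ ⇑v = μ • ⇑v := hE.mulVec_eigenvectorBasis i
      have hEt : (A - B)ᵀ = A - B := by
        ext a b; have := congrFun (congrFun hE a) b; simpa using this
      have ha := hAlow v
      have hb := hBlow v
      rw [hnv, one_pow, mul_one] at ha hb
      have key : ⇑v ⬝ᵥ (D *ᵥ ⇑v)
          = μ * (⇑v ⬝ᵥ (A *ᵥ ⇑v)) + μ * (⇑v ⬝ᵥ (B *ᵥ ⇑v)) := by
        rw [← hID, add_mulVec, dotProduct_add]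
        congr 1
        · rw [← mulVec_mulVec, hev, mulVec_smul, dotProduct_smul, smul_eq_mul]
        · rw [← mulVec_mulVec, dotProduct_mulVec]
          have ht : ⇑v ᵥ* (A - B) = μ • ⇑v := by
            conv_lhs => rw [← hEt]
            rw [vecMul_transpose, hev]
          rw [ht, smul_dotProduct, smul_eq_mul]
      have hDnn : 0 ≤ ⇑v ⬝ᵥ (D *ᵥ ⇑v) := by simpa using hD.dotProduct_mulVec_nonneg ⇑v
      have hDub : ⇑v ⬝ᵥ (D *ᵥ ⇑v) ≤ ‖D‖ := by
        have h1 : ⇑v ⬝ᵥ (D *ᵥ ⇑v)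
            = ⟪v, (EuclideanSpace.equiv (Fin p) ℝ).symm (D *ᵥ ⇑v)⟫ := by
          rw [inner_eq_dot, eu_coe]
        rw [h1]
        calc ⟪v, (EuclideanSpace.equiv (Fin p) ℝ).symm (D *ᵥ ⇑v)⟫
            ≤ ‖v‖ * ‖(EuclideanSpace.equiv (Fin p) ℝ).symm (D *ᵥ ⇑v)‖ :=
              real_inner_le_norm _ _
          _ ≤ ‖v‖ * (‖D‖ * ‖v‖) :=
              mul_le_mul_of_nonneg_left (Matrix.l2_opNorm_mulVec D v) (norm_nonneg v)
          _ = ‖D‖ := by rw [hnv]; ring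
      have hμ0 : 0 ≤ μ := by nlinarith
      rw [abs_of_nonneg hμ0]
      have h6 : μ * (2 * c) ≤ ‖D‖ := by nlinarith
      nlinarith [mul_le_mul_of_nonneg_right h6 (norm_nonneg (B⁻¹)), hcK, norm_nonneg D]
    exact hermitian_opNorm_le hE (by positivity) hbound
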